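/- Let ι be a nonempty finite index set, let w, u : ι → ℝ, and let i* ∈ ι with w(i*) < w(i) for every i ≠ i*. Then the soft selector softminsel_γ(w, u) = ∑_{i∈ι} u(i) · π_γ(i) converges to u(i*) as γ → 0 from the right; that is, in the deterministic limit the selector returns the value of u at the unique minimizer of w (the log-variance along the minimal-cost path in uDTW). -/

import Mathlib

open Finset Real Filter Topology

/-- Deterministic limit of the soft selector: if `i⋆` is the unique minimizer of `w`, then
`softminsel_γ(w, u) = ∑ i, u i · π_γ(i)` tends to `u i⋆` as `γ → 0⁺`, i.e. the selector
returns the value of `u` at the unique minimizer of `w`. -/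
theorem softminsel_tendsto_value_at_min
    {ι : Type*} [Fintype ι] [Nonempty ι]
    (w u : ι → ℝ) (μ : ℝ) (istar : ι) (hmin : ∀ i : ι, i ≠ istar → w istar < w i) :
    Tendsto (fun γ : ℝ =>
        ∑ i, u i * (Real.exp (-(w i - μ) / γ) / ∑ j, Real.exp (-(w j - μ) / γ)))
      (nhdsWithin 0 (Set.Ioi 0)) (nhds (u istar)) := by
  classical
  have hterm : ∀ i : ι, Tendsto (fun γ : ℝ => Real.exp (-(w i - w istar) / γ))
      (nhdsWithin 0 (Set.Ioi 0)) (nhds (if i = istar then 1 else 0)) := by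
    intro i
    by_cases h : i = istar
    · simp [h]
    · simp only [if_neg h]
      have hw : 0 < w i - w istar := sub_pos.mpr (hmin i h)
      have h1 : Tendsto (fun γ : ℝ => -(w i - w istar) / γ) (nhdsWithin 0 (Set.Ioi 0)) atBot := by
        have h2 : Tendsto (fun γ : ℝ => -(w i - w istar) * γ⁻¹)
            (nhdsWithin 0 (Set.Ioi 0)) atBot :=
          tendsto_inv_nhdsGT_zero.const_mul_atTop_of_neg (by linarith)
        simpa [div_eq_mul_inv] using h2
      exact Real.tendsto_exp_atBot.comp h1
  have hden : Tendsto (fun γ : ℝ => ∑ j, Real.exp (-(w j - w istar) / γ))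
      (nhdsWithin 0 (Set.Ioi 0)) (nhds 1) := by
    have := tendsto_finset_sum Finset.univ (fun i (_ : i ∈ Finset.univ) => hterm i)
    simpa using this
  have hmain : Tendsto (fun γ : ℝ =>
      ∑ i, u i * (Real.exp (-(w i - w istar) / γ) / ∑ j, Real.exp (-(w j - w istar) / γ)))
      (nhdsWithin 0 (Set.Ioi 0)) (nhds (u istar)) := by
    have := tendsto_finset_sum Finset.univ
      (fun i (_ : i ∈ Finset.univ) => (((hterm i).div hden one_ne_zero).const_mul (u i)))
    simpa using this
  refine hmain.congr' ?_
  filter_upwards [self_mem_nhdsWithin] with γ hγ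
  have hγ0 : (γ : ℝ) ≠ 0 := ne_of_gt hγ
  have hc : Real.exp (-(w istar - μ) / γ) ≠ 0 := (Real.exp_pos _).ne'
  have hfac : ∀ i, Real.exp (-(w i - μ) / γ)
      = Real.exp (-(w i - w istar) / γ) * Real.exp (-(w istar - μ) / γ) := by
    intro i
    rw [← Real.exp_add]
    congr 1
    field_simp
    ring
  have hdeneq : (∑ j, Real.exp (-(w j - μ) / γ))
      = (∑ j, Real.exp (-(w j - w istar) / γ)) * Real.exp (-(w istar - μ) / γ) := by
    rw [Finset.sum_mul]
    exact Finset.sum_congr rfl fun j _ => hfac j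
  refine Finset.sum_congr rfl fun i _ => ?_
  rw [hfac i, hdeneq, mul_div_mul_right _ _ hc]
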